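/- For every integer g ≥ 3: gcd(2g−3, 4g−4) = 1, (2g−3)² ≡ 1 (mod 4g−4), and the tuple (4g−4, 0; (1, 4g−4), (2g−3, 4g−4), (1, 2)) is a cyclic data set of degree 4(g−1) and genus g−1 whose two fixed points (1, 4g−4) and (2g−3, 4g−4) are compatible with twist factor 2(g−1): indeed 1 + (2g−3) = 2(g−1) modulo 4(g−1). -/
import Mathlib


/-- A *cyclic data set* of degree `n` and genus `g` (Definition 2.1 of the paper), with
orbifold genus `g₀` and cone-point data `C = [(c₁,n₁), …, (c_k,n_k)]`: `n ≥ 2`, `k ≥ 1`,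
each `nᵢ ≥ 2` divides `n` with `gcd(cᵢ, nᵢ) = 1`; omitting any `nᵢ` does not change the
lcm of the `nⱼ`'s; if `g₀ = 0` then that lcm equals `n`; `Σᵢ (n/nᵢ)·cᵢ ≡ 0 (mod n)`;
and the Riemann–Hurwitz formula `2g − 2 = n(2g₀ − 2) + Σᵢ (n − n/nᵢ)` holds. -/
def IsCyclicDataSet (n g₀ g : ℕ) (C : List (ℤ × ℕ)) : Prop :=
  2 ≤ n ∧ C ≠ [] ∧
  (∀ p ∈ C, 2 ≤ p.2 ∧ p.2 ∣ n ∧ Int.gcd p.1 (p.2 : ℤ) = 1) ∧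
  (∀ i < C.length,
    ((C.map Prod.snd).eraseIdx i).foldr Nat.lcm 1 = (C.map Prod.snd).foldr Nat.lcm 1) ∧
  (g₀ = 0 → (C.map Prod.snd).foldr Nat.lcm 1 = n) ∧
  ((n : ℤ) ∣ (C.map (fun p => ((n : ℤ) / (p.2 : ℤ)) * p.1)).sum) ∧
  (2 * (g : ℤ) - 2 =
    (n : ℤ) * (2 * (g₀ : ℤ) - 2) + (C.map (fun p => (n : ℤ) - (n : ℤ) / (p.2 : ℤ))).sum)

/-- For every integer `g ≥ 3`: `gcd(2g−3, 4g−4) = 1`,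
`(2g−3)² ≡ 1 (mod 4g−4)`, and the tuple `(4g−4, 0; (1, 4g−4), (2g−3, 4g−4), (1, 2))` is
a cyclic data set of degree `4(g−1)` and genus `g−1` whose two fixed points
`(1, 4g−4)` and `(2g−3, 4g−4)` are compatible with twist factor `2(g−1)`:
indeed `1 + (2g−3) = 2(g−1)` modulo `4(g−1)`. -/
theorem stmt_14 (g : ℕ) (hg : 3 ≤ g) :
    Nat.gcd (2*g - 3) (4*g - 4) = 1 ∧
    (2*(g:ℤ) - 3)^2 ≡ 1 [ZMOD 4*(g:ℤ) - 4] ∧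
    IsCyclicDataSet (4*(g - 1)) 0 (g - 1)
      [(1, 4*g - 4), (2*(g:ℤ) - 3, 4*g - 4), (1, 2)] ∧
    1 + (2*(g:ℤ) - 3) ≡ 2*((g:ℤ) - 1) [ZMOD 4*((g:ℤ) - 1)] := by
  have hG : (3:ℤ) ≤ (g:ℤ) := by exact_mod_cast hg
  have hgcd : Nat.gcd (2*g - 3) (4*g - 4) = 1 := by
    have hd := Nat.gcd_dvd_left (2*g - 3) (4*g - 4)
    have hd' := Nat.gcd_dvd_right (2*g - 3) (4*g - 4)
    have h2 : Nat.gcd (2*g - 3) (4*g - 4) ∣ 2 := by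
      have h := Nat.dvd_sub hd' (hd.mul_left 2)
      rwa [show 4*g - 4 - 2*(2*g-3) = 2 from by omega] at h
    rcases (Nat.dvd_prime Nat.prime_two).mp h2 with h | h
    · exact h
    · rw [h] at hd; omega
  refine ⟨hgcd, ?_, ?_, ?_⟩
  · show _ % _ = _ % _
    have : (2*(g:ℤ) - 3)^2 = 1 + (4*(g:ℤ) - 4) * ((g:ℤ) - 2) := by ring
    rw [this, Int.add_mul_emod_self_left]
  · have hcast : ((4*(g-1) : ℕ) : ℤ) = 4*(g:ℤ) - 4 := by
      rw [Nat.cast_mul, Nat.cast_sub (show 1 ≤ g by omega)]; push_cast; ring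
    have hcast2 : ((4*g - 4 : ℕ) : ℤ) = 4*(g:ℤ) - 4 := by omega
    have hlcm2 : Nat.lcm (4*g-4) 2 = 4*g-4 := by
      refine Nat.dvd_antisymm (Nat.lcm_dvd dvd_rfl ⟨2*g-2, by omega⟩) (Nat.dvd_lcm_left _ _)
    have hlcmself : Nat.lcm (4*g-4) (4*g-4) = 4*g-4 := Nat.lcm_self _
    have hfull : Nat.lcm (4*g-4) (Nat.lcm (4*g-4) (Nat.lcm 2 1)) = 4*g-4 := by
      rw [Nat.lcm_one_right, hlcm2, hlcmself]
    refine ⟨by omega, by simp, ?_, ?_, ?_, ?_, ?_⟩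
    · intro p hp
      simp only [List.mem_cons, List.not_mem_nil, or_false] at hp
      rcases hp with h | h | h <;> subst h
      · exact ⟨by omega, ⟨1, by omega⟩, by simp [Int.gcd]⟩
      · refine ⟨by omega, ⟨1, by omega⟩, ?_⟩
        have : (2*(g:ℤ) - 3) = ((2*g - 3 : ℕ) : ℤ) := by omega
        rw [this, Int.gcd_natCast_natCast, hgcd]
      · exact ⟨le_refl 2, ⟨2*(g-1), by omega⟩, by simp [Int.gcd]⟩
    · intro i hi
      simp only [List.length_cons, List.length_nil] at hi
      interval_cases i <;>
        simp only [List.map_cons, List.map_nil, List.eraseIdx, List.foldr] <;>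
        rw [hfull] <;>
        simp [Nat.lcm_one_right, hlcm2, hlcmself]
    · intro _
      simp only [List.map_cons, List.map_nil, List.foldr]
      rw [hfull]; omega
    · simp only [List.map_cons, List.map_nil, List.sum_cons, List.sum_nil]
      rw [hcast, hcast2]
      push_cast
      have e1 : (4*(g:ℤ) - 4) / (4*(g:ℤ) - 4) = 1 := Int.ediv_self (by omega)
      have e2 : (4*(g:ℤ) - 4) / 2 = 2*(g:ℤ) - 2 := by
        rw [show (4*(g:ℤ) - 4) = 2 * (2*(g:ℤ) - 2) by ring,
          Int.mul_ediv_cancel_left _ two_ne_zero]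
      rw [e1, e2]
      exact ⟨1, by ring⟩
    · simp only [List.map_cons, List.map_nil, List.sum_cons, List.sum_nil]
      rw [hcast, hcast2]
      have hcast3 : ((g - 1 : ℕ) : ℤ) = (g:ℤ) - 1 := by omega
      rw [hcast3]
      push_cast
      have e1 : (4*(g:ℤ) - 4) / (4*(g:ℤ) - 4) = 1 := Int.ediv_self (by omega)
      have e2 : (4*(g:ℤ) - 4) / 2 = 2*(g:ℤ) - 2 := by
        rw [show (4*(g:ℤ) - 4) = 2 * (2*(g:ℤ) - 2) by ring,
          Int.mul_ediv_cancel_left _ two_ne_zero]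
      rw [e1, e2]; ring
  · show _ % _ = _ % _
    ring_nf
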